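/- Closed form of the consensus iterates: let (Ω, 𝒜, μ) be a σ-finite nonzero measure space, let N ≥ 1, let Π be a real N×N matrix with nonnegative entries whose rows sum to 1 (Π_{ij} ≥ 0, ∑_{j} Π_{ij} = 1 for every i), and let p_0^1, …, p_0^N be μ-a.e. strictly positive, μ-integrable probability densities with respect to μ. Define recursively, for l ≥ 1 and each i, p_l^i(x) := ∏_{j=1}^{N} p_{l-1}^j(x)^{Π_{ij}} / ∫ ∏_{j=1}^{N} p_{l-1}^j(y)^{Π_{ij}} dμ(y). Then all the normalizing integrals appearing in this recursion are finite and strictly positive, and for every l ≥ 0 and every i, p_l^i(x) = ∏_{j=1}^{N} p_0^j(x)^{(Π^l)_{ij}} / ∫ ∏_{j=1}^{N} p_0^j(y)^{(Π^l)_{ij}} dμ(y) for μ-almost every x, where (Π^l)_{ij} denotes the (i,j) entry of the l-th matrix power of Π. -/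

import Mathlib

open MeasureTheory

/-- closed form of the consensus iterates. If each consensus
iterate is obtained by the normalized weighted geometric mean of the previous
iterates with weights given by a row-stochastic matrix `M`, then all the
normalizing integrals are finite and strictly positive and the `l`-th iterate
is the normalized weighted geometric mean of the initial densities with weights
given by the entries of the matrix power `M^l`. -/
theorem consensus_iterates_closed_form
    {Ω : Type*} [MeasurableSpace Ω] (μ : Measure Ω) [SigmaFinite μ] (hμ : μ ≠ 0)
    {N : ℕ} (hN : 1 ≤ N)
    (M : Matrix (Fin N) (Fin N) ℝ)
    (hMnn : ∀ i j, 0 ≤ M i j) (hMrow : ∀ i, ∑ j, M i j = 1)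
    (p₀ : Fin N → Ω → ℝ)
    (hmeas : ∀ i, Measurable (p₀ i))
    (hnn : ∀ i x, 0 ≤ p₀ i x)
    (hpos : ∀ i, ∀ᵐ x ∂μ, 0 < p₀ i x)
    (hint : ∀ i, Integrable (p₀ i) μ)
    (hone : ∀ i, ∫ x, p₀ i x ∂μ = 1)
    (p : ℕ → Fin N → Ω → ℝ)
    (hp0 : ∀ i, p 0 i = p₀ i)
    (hrec : ∀ l i x, p (l + 1) i x
      = (∏ j, p l j x ^ M i j) / ∫ y, ∏ j, p l j y ^ M i j ∂μ) :
    (∀ l i, Integrable (fun x => ∏ j, p l j x ^ M i j) μ ∧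
        0 < ∫ x, ∏ j, p l j x ^ M i j ∂μ) ∧
    (∀ l i, Integrable (fun x => ∏ j, p₀ j x ^ (M ^ l) i j) μ ∧
        0 < ∫ x, ∏ j, p₀ j x ^ (M ^ l) i j ∂μ) ∧
    ∀ l i, ∀ᵐ x ∂μ, p l i x
      = (∏ j, p₀ j x ^ (M ^ l) i j) / ∫ y, ∏ j, p₀ j y ^ (M ^ l) i j ∂μ := by
  classical
  -- matrix powers of a row-stochastic matrix are row-stochastic
  have hpow : ∀ l : ℕ, (∀ i j, 0 ≤ (M ^ l) i j) ∧ (∀ i, ∑ j, (M ^ l) i j = 1) := by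
    intro l
    induction l with
    | zero =>
      refine ⟨fun i j => ?_, fun i => ?_⟩
      · rw [pow_zero, Matrix.one_apply]
        split <;> norm_num
      · rw [pow_zero]
        simp [Matrix.one_apply]
    | succ l ih =>
      have hmul : ∀ i j, (M ^ (l + 1)) i j = ∑ k, M i k * (M ^ l) k j := by
        intro i j
        rw [pow_succ', Matrix.mul_apply]
      refine ⟨fun i j => ?_, fun i => ?_⟩
      · rw [hmul]
        exact Finset.sum_nonneg fun k _ => mul_nonneg (hMnn i k) (ih.1 k j)
      · simp_rw [hmul]
        rw [Finset.sum_comm]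
        simp_rw [← Finset.mul_sum, ih.2]
        simpa using hMrow i
  set q : ℕ → Fin N → Ω → ℝ := fun l i x => ∏ j, p₀ j x ^ (M ^ l) i j with hqdef
  have hq_meas : ∀ l i, Measurable (q l i) := by
    intro l i
    exact Finset.measurable_prod _ fun j _ => by fun_prop
  have hq_nn : ∀ l i x, 0 ≤ q l i x := fun l i x =>
    Finset.prod_nonneg fun j _ => Real.rpow_nonneg (hnn j x) _
  have hq_le : ∀ l i x, q l i x ≤ ∑ j, (M ^ l) i j * p₀ j x := fun l i x =>
    Real.geom_mean_le_arith_mean_weighted _ _ _ (fun j _ => (hpow l).1 i j)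
      ((hpow l).2 i) (fun j _ => hnn j x)
  have hq_int : ∀ l i, Integrable (q l i) μ := by
    intro l i
    have hb : Integrable (fun x => ∑ j, (M ^ l) i j * p₀ j x) μ :=
      integrable_finset_sum _ fun j _ => (hint j).const_mul _
    refine hb.mono' (hq_meas l i).aestronglyMeasurable ?_
    filter_upwards with x
    rw [Real.norm_eq_abs, abs_of_nonneg (hq_nn l i x)]
    exact hq_le l i x
  have hposall : ∀ᵐ x ∂μ, ∀ j, 0 < p₀ j x := ae_all_iff.mpr hpos
  have hq_pos : ∀ l i, ∀ᵐ x ∂μ, 0 < q l i x := by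
    intro l i
    filter_upwards [hposall] with x hx
    exact Finset.prod_pos fun j _ => Real.rpow_pos_of_pos (hx j) _
  have hZ_pos : ∀ l i, 0 < ∫ x, q l i x ∂μ := by
    intro l i
    rw [integral_pos_iff_support_of_nonneg_ae
      (Filter.Eventually.of_forall (hq_nn l i)) (hq_int l i)]
    have h1 : ∀ᵐ x ∂μ, x ∈ Function.support (q l i) :=
      (hq_pos l i).mono fun x hx => ne_of_gt hx
    have hc : μ (Function.support (q l i))ᶜ = 0 := h1
    calc (0 : ENNReal) < μ Set.univ := Measure.measure_univ_pos.mpr hμ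
      _ = μ (Function.support (q l i) ∪ (Function.support (q l i))ᶜ) := by
          rw [Set.union_compl_self]
      _ ≤ μ (Function.support (q l i)) + μ (Function.support (q l i))ᶜ :=
          measure_union_le _ _
      _ = μ (Function.support (q l i)) := by rw [hc, add_zero]
  have hq0 : ∀ i, q 0 i = p₀ i := by
    intro i
    funext x
    show ∏ j, p₀ j x ^ (M ^ 0) i j = p₀ i x
    rw [pow_zero]
    rw [Finset.prod_eq_single i
      (fun j _ hji => by rw [Matrix.one_apply_ne' hji, Real.rpow_zero]) (by simp)]
    rw [Matrix.one_apply_eq, Real.rpow_one]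
  -- key pointwise algebraic identity
  have halg : ∀ (l : ℕ) (i : Fin N) (x : Ω), (∀ j, 0 < p₀ j x) →
      ∏ j, q l j x ^ M i j = q (l + 1) i x := by
    intro l i x hx
    have h1 : ∀ j : Fin N, q l j x ^ M i j = ∏ k, p₀ k x ^ ((M ^ l) j k * M i j) := by
      intro j
      show (∏ k, p₀ k x ^ (M ^ l) j k) ^ M i j = _
      rw [← Real.finset_prod_rpow _ _ (fun k _ => Real.rpow_nonneg (hnn k x) _) _]
      refine Finset.prod_congr rfl fun k _ => ?_
      rw [← Real.rpow_mul (hnn k x)]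
    calc ∏ j, q l j x ^ M i j
        = ∏ j, ∏ k, p₀ k x ^ ((M ^ l) j k * M i j) :=
          Finset.prod_congr rfl fun j _ => h1 j
      _ = ∏ k, ∏ j, p₀ k x ^ ((M ^ l) j k * M i j) := Finset.prod_comm
      _ = ∏ k, p₀ k x ^ (∑ j, (M ^ l) j k * M i j) :=
          Finset.prod_congr rfl fun k _ => (Real.rpow_sum_of_pos (hx k) _ _).symm
      _ = q (l + 1) i x := by
          refine Finset.prod_congr rfl fun k _ => ?_
          congr 1
          rw [pow_succ', Matrix.mul_apply]
          exact Finset.sum_congr rfl fun j _ => (mul_comm _ _).symm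
  have hC_pos : ∀ l i, 0 < ∏ j, (∫ y, q l j y ∂μ) ^ M i j := fun l i =>
    Finset.prod_pos fun j _ => Real.rpow_pos_of_pos (hZ_pos l j) _
  -- from the closed form at step l, the closed form for the recursion integrand
  have hstep : ∀ l i, (∀ j, ∀ᵐ x ∂μ, p l j x = q l j x / ∫ y, q l j y ∂μ) →
      (∀ᵐ x ∂μ,
        ∏ j, p l j x ^ M i j = q (l + 1) i x / ∏ j, (∫ y, q l j y ∂μ) ^ M i j) := by
    intro l i h
    filter_upwards [ae_all_iff.mpr h, hposall] with x h1 h2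
    calc ∏ j, p l j x ^ M i j
        = ∏ j, (q l j x / ∫ y, q l j y ∂μ) ^ M i j :=
          Finset.prod_congr rfl fun j _ => by rw [h1 j]
      _ = ∏ j, (q l j x ^ M i j / (∫ y, q l j y ∂μ) ^ M i j) :=
          Finset.prod_congr rfl fun j _ =>
            Real.div_rpow (hq_nn l j x) (hZ_pos l j).le _
      _ = (∏ j, q l j x ^ M i j) / ∏ j, (∫ y, q l j y ∂μ) ^ M i j :=
          Finset.prod_div_distrib _ _
      _ = _ := by rw [halg l i x h2]
  have key : ∀ l i, ∀ᵐ x ∂μ, p l i x = q l i x / ∫ y, q l i y ∂μ := by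
    intro l
    induction l with
    | zero =>
      intro i
      filter_upwards with x
      rw [hp0 i, hq0 i, hone i, div_one]
    | succ l ih =>
      intro i
      have hprod := hstep l i ih
      have hZrec : ∫ y, ∏ j, p l j y ^ M i j ∂μ
          = (∫ y, q (l + 1) i y ∂μ) / ∏ j, (∫ y, q l j y ∂μ) ^ M i j := by
        rw [integral_congr_ae hprod, integral_div]
      filter_upwards [hprod] with x hx
      rw [hrec l i x, hx, hZrec, div_div_div_comm, div_self (hC_pos l i).ne', div_one]
  refine ⟨?_, fun l i => ⟨hq_int l i, hZ_pos l i⟩, key⟩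
  intro l i
  have hprod : (fun x => ∏ j, p l j x ^ M i j)
      =ᵐ[μ] fun x => q (l + 1) i x / ∏ j, (∫ y, q l j y ∂μ) ^ M i j :=
    hstep l i (key l)
  constructor
  · exact Integrable.congr ((hq_int (l + 1) i).div_const _) hprod.symm
  · rw [integral_congr_ae hprod, integral_div]
    exact div_pos (hZ_pos (l + 1) i) (hC_pos l i)
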